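/- Deterministic form of Lemma 1 (warm-up stage reaches the threshold level a). Assume η₀·L ≤ 1 and 0 < η₀·μ < 1. Let a, G, δ > 0, let m₀ ≥ 4G²/(δ·μ·a), let F(u₀) > 0, and let the natural number T₀ satisfy T₀ ≥ log(2F(u₀)/a) / log(1/(1 − η₀·μ)). Suppose u₀, u₁, …, u_{T₀} ∈ E are generated by u_{t+1} = u_t − η₀·g̃_t, where for every t the vector g̃_t ∈ E satisfies ‖g̃_t − ∇F(u_t)‖² ≤ 4G²/(δ·m₀). Then F(u_{T₀}) ≤ a. -/

import Mathlib

open Real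

/-- Descent lemma: quadratic upper bound from Lipschitz gradient. -/
lemma descent_lemma
    {E : Type*} [NormedAddCommGroup E] [InnerProductSpace ℝ E] [CompleteSpace E]
    (F : E → ℝ) (L : ℝ) (hL : 0 < L)
    (hdiff : Differentiable ℝ F)
    (hlip : ∀ w u : E, ‖gradient F w - gradient F u‖ ≤ L * ‖w - u‖)
    (x v : E) :
    F (x + v) ≤ F x + inner ℝ (gradient F x) v + L / 2 * ‖v‖ ^ 2 := by
  set h : ℝ → ℝ := fun t => F (x + t • v) - t * inner ℝ (gradient F x) v - L * t ^ 2 / 2 * ‖v‖ ^ 2 with hh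
  have hderiv : ∀ t : ℝ, HasDerivAt h
      ((inner ℝ (gradient F (x + t • v)) v : ℝ) - inner ℝ (gradient F x) v - L * t * ‖v‖ ^ 2) t := by
    intro t
    have hc : HasDerivAt (fun t : ℝ => x + t • v) v t := by
      simpa using ((hasDerivAt_id t).smul_const v).const_add x
    have hF : HasDerivAt (fun t : ℝ => F (x + t • v)) (inner ℝ (gradient F (x + t • v)) v) t := by
      have hg : HasFDerivAt F (InnerProductSpace.toDual ℝ E (gradient F (x + t • v))) (x + t • v) :=
        ((hdiff _).hasGradientAt).hasFDerivAt
      have := hg.comp_hasDerivAt t hc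
      have e : (inner ℝ (gradient F (x + t • v)) v : ℝ) = InnerProductSpace.toDual ℝ E (gradient F (x + t • v)) v := (InnerProductSpace.toDual_apply_apply).symm
      rw [e]; exact this
    have h2 : HasDerivAt (fun t : ℝ => t * (inner ℝ (gradient F x) v : ℝ))
        (inner ℝ (gradient F x) v) t := by
      simpa using (hasDerivAt_id t).mul_const (inner ℝ (gradient F x) v : ℝ)
    have h3 : HasDerivAt (fun t : ℝ => L * t ^ 2 / 2 * ‖v‖ ^ 2) (L * t * ‖v‖ ^ 2) t := by
      have : HasDerivAt (fun t : ℝ => t ^ 2) (2 * t) t := by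
        simpa using (hasDerivAt_pow 2 t)
      have := ((this.const_mul L).div_const 2).mul_const (‖v‖ ^ 2)
      refine this.congr_deriv ?_
      ring
    exact (hF.sub h2).sub h3
  have hanti : AntitoneOn h (Set.Icc (0:ℝ) 1) := by
    apply antitoneOn_of_deriv_nonpos (convex_Icc 0 1)
    · exact Continuous.continuousOn (by
        have : ∀ t : ℝ, DifferentiableAt ℝ h t := fun t => (hderiv t).differentiableAt
        exact (Differentiable.continuous this))
    · intro t _
      exact (hderiv t).differentiableAt.differentiableWithinAt
    · intro t ht
      rw [interior_Icc] at ht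
      rw [(hderiv t).deriv]
      have hb : (inner ℝ (gradient F (x + t • v) - gradient F x) v : ℝ) ≤ L * t * ‖v‖ ^ 2 := by
        calc (inner ℝ (gradient F (x + t • v) - gradient F x) v : ℝ)
            ≤ ‖gradient F (x + t • v) - gradient F x‖ * ‖v‖ := real_inner_le_norm _ _
          _ ≤ L * ‖(x + t • v) - x‖ * ‖v‖ := by
              gcongr; exact hlip _ _
          _ = L * (|t| * ‖v‖) * ‖v‖ := by rw [add_sub_cancel_left, norm_smul, Real.norm_eq_abs]
          _ = L * t * ‖v‖ ^ 2 := by rw [abs_of_pos ht.1]; ring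
      have : (inner ℝ (gradient F (x + t • v)) v : ℝ) - inner ℝ (gradient F x) v
          = inner ℝ (gradient F (x + t • v) - gradient F x) v := by
        rw [inner_sub_left]
      linarith
  have h10 : h 1 ≤ h 0 := hanti (by norm_num) (by norm_num) (by norm_num)
  simp only [hh, one_smul, zero_smul, add_zero, one_pow, one_mul, zero_pow, mul_zero,
    zero_mul, sub_zero, mul_one] at h10
  linarith
/-- Deterministic form of Lemma 1 (warm-up stage reaches the threshold level `a`). -/
theorem warmup_reaches_threshold
    {E : Type*} [NormedAddCommGroup E] [InnerProductSpace ℝ E] [CompleteSpace E]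
    (F : E → ℝ) (L μ : ℝ) (hL : 0 < L) (hμ : 0 < μ)
    (hdiff : Differentiable ℝ F)
    (hlip : ∀ w u : E, ‖gradient F w - gradient F u‖ ≤ L * ‖w - u‖)
    (hFnonneg : ∀ w : E, 0 ≤ F w)
    (hPL : ∀ w : E, 2 * μ * F w ≤ ‖gradient F w‖ ^ 2)
    (η₀ a G δ m₀ : ℝ)
    (hη₀L : η₀ * L ≤ 1) (hη₀μ0 : 0 < η₀ * μ) (hη₀μ1 : η₀ * μ < 1)
    (ha : 0 < a) (hG : 0 < G) (hδ : 0 < δ)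
    (hm₀ : 4 * G ^ 2 / (δ * μ * a) ≤ m₀)
    (T₀ : ℕ) (u g : ℕ → E)
    (hu₀ : 0 < F (u 0))
    (hT₀ : Real.log (2 * F (u 0) / a) / Real.log (1 / (1 - η₀ * μ)) ≤ T₀)
    (hupd : ∀ t < T₀, u (t + 1) = u t - η₀ • g t)
    (hg : ∀ t < T₀, ‖g t - gradient F (u t)‖ ^ 2 ≤ 4 * G ^ 2 / (δ * m₀)) :
    F (u T₀) ≤ a := by
  have hη₀ : 0 < η₀ := by nlinarith
  have hm₀pos : 0 < m₀ := lt_of_lt_of_le (by positivity) hm₀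
  have hnoise : 4 * G ^ 2 / (δ * m₀) ≤ μ * a := by
    rw [div_le_iff₀ (by positivity)]
    rw [div_le_iff₀ (by positivity)] at hm₀
    nlinarith
  set r : ℝ := 1 - η₀ * μ with hr
  have hr0 : 0 < r := by rw [hr]; linarith
  have hr1 : r < 1 := by rw [hr]; linarith
  have hrμ : η₀ * μ = 1 - r := by rw [hr]; ring
  -- one-step descent
  have step : ∀ t < T₀, F (u (t + 1)) ≤ r * F (u t) + η₀ * μ * a / 2 := by
    intro t ht
    have hdesc := descent_lemma F L hL hdiff hlip (u t) (-(η₀ • g t))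
    have hupd' : u (t + 1) = u t + -(η₀ • g t) := by
      rw [hupd t ht]; abel
    rw [← hupd'] at hdesc
    have hin : (inner ℝ (gradient F (u t)) (-(η₀ • g t)) : ℝ)
        = -(η₀ * inner ℝ (gradient F (u t)) (g t)) := by
      rw [inner_neg_right, real_inner_smul_right]
    have hnrm : ‖-(η₀ • g t)‖ ^ 2 = η₀ ^ 2 * ‖g t‖ ^ 2 := by
      rw [norm_neg, norm_smul, Real.norm_eq_abs, mul_pow, sq_abs]
    rw [hin, hnrm] at hdesc
    have hid : ‖g t - gradient F (u t)‖ ^ 2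
        = ‖g t‖ ^ 2 - 2 * inner ℝ (gradient F (u t)) (g t) + ‖gradient F (u t)‖ ^ 2 := by
      rw [norm_sub_sq_real, real_inner_comm]
    have hLsq : L / 2 * (η₀ ^ 2 * ‖g t‖ ^ 2) ≤ η₀ / 2 * ‖g t‖ ^ 2 := by
      have := mul_le_mul_of_nonneg_right hη₀L
        (by positivity : (0:ℝ) ≤ η₀ * ‖g t‖ ^ 2 / 2)
      nlinarith
    have hη₀half : (0:ℝ) ≤ η₀ / 2 := by linarith
    have h3 : η₀ / 2 * ‖g t - gradient F (u t)‖ ^ 2 ≤ η₀ / 2 * (μ * a) :=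
      mul_le_mul_of_nonneg_left (le_trans (hg t ht) hnoise) hη₀half
    have h4 : η₀ / 2 * (2 * μ * F (u t)) ≤ η₀ / 2 * ‖gradient F (u t)‖ ^ 2 :=
      mul_le_mul_of_nonneg_left (hPL (u t)) hη₀half
    have h5 : η₀ / 2 * ‖g t - gradient F (u t)‖ ^ 2
        = η₀ / 2 * ‖g t‖ ^ 2 - η₀ * inner ℝ (gradient F (u t)) (g t)
          + η₀ / 2 * ‖gradient F (u t)‖ ^ 2 := by rw [hid]; ring
    rw [hrμ] at *
    linarith
  -- induction
  have key : ∀ t ≤ T₀, F (u t) ≤ r ^ t * F (u 0) + a / 2 * (1 - r ^ t) := by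
    intro t
    induction t with
    | zero => intro _; simp
    | succ n ih =>
      intro hn1
      have hn : n < T₀ := Nat.lt_of_succ_le hn1
      have ihn := ih hn.le
      have hs := step n hn
      have hmul := mul_le_mul_of_nonneg_left ihn hr0.le
      rw [hrμ] at hs
      rw [pow_succ]
      linarith
  -- final power bound
  have hF₀ := hu₀
  have hlogrpos : 0 < Real.log (1 / r) := Real.log_pos (by rw [lt_div_iff₀ hr0]; linarith)
  have h1 : Real.log (2 * F (u 0) / a) ≤ T₀ * Real.log (1 / r) := by
    have := (div_le_iff₀ hlogrpos).mp hT₀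
    linarith
  have hloginv : Real.log (1 / r) = -Real.log r := by rw [one_div, Real.log_inv]
  have hx : (0:ℝ) < r ^ T₀ * (2 * F (u 0) / a) := by positivity
  have hlog0 : Real.log (r ^ T₀ * (2 * F (u 0) / a)) ≤ 0 := by
    rw [Real.log_mul (by positivity) (by positivity), Real.log_pow]
    rw [hloginv] at h1
    linarith
  have hle1 : r ^ T₀ * (2 * F (u 0) / a) ≤ 1 := by
    have := Real.exp_le_exp.mpr hlog0
    rwa [Real.exp_log hx, Real.exp_zero] at this
  rw [show r ^ T₀ * (2 * F (u 0) / a) = r ^ T₀ * (2 * F (u 0)) / a by ring,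
    div_le_one ha] at hle1
  have hkey := key T₀ le_rfl
  have hnn : 0 ≤ a * r ^ T₀ := mul_nonneg ha.le (pow_nonneg hr0.le T₀)
  linarith
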